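/- Let G be a finite simple graph and σ an automorphism of G. If v is a vertex moved by σ (σ(v) ≠ v), and H_v is a connected subgraph of G containing v that is maximal with respect to containing no vertex fixed by σ of degree 1 or degree ≥ 3, then the corresponding subgraph H_{σ(v)} (defined the same way starting from σ(v)) is isomorphic to H_v, and H_v and H_{σ(v)} are either equal or vertex-disjoint. -/

import Mathlib

/-- The restriction of `G` to the vertices that are not "bad" for `σ`, where a vertex is
bad if it is fixed by `σ` and has degree 1 or degree at least 3 in `G`. -/
def goodRestriction {V : Type*} [Fintype V] (G : SimpleGraph V) [DecidableRel G.Adj]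
    (σ : Equiv.Perm V) : SimpleGraph V where
  Adj x y := G.Adj x y ∧
    ¬(σ x = x ∧ (G.degree x = 1 ∨ 3 ≤ G.degree x)) ∧
    ¬(σ y = y ∧ (G.degree y = 1 ∨ 3 ≤ G.degree y))
  symm := by
    refine ⟨fun x y h => ?_⟩
    exact ⟨h.1.symm, h.2.2, h.2.1⟩
  loopless := by
    refine ⟨fun x h => ?_⟩
    exact G.irrefl h.1

/-- The vertex set of `H_u`: the maximal connected set of vertices containing `u` and
avoiding bad fixed vertices, i.e. the vertices reachable from `u` in the restriction. -/
def Hset {V : Type*} [Fintype V] (G : SimpleGraph V) [DecidableRel G.Adj]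
    (σ : Equiv.Perm V) (u : V) : Set V :=
  {w | (goodRestriction G σ).Reachable u w}
section Aux
variable {V : Type*} [Fintype V] (G : SimpleGraph V) [DecidableRel G.Adj]
    (σ : Equiv.Perm V) (hσ : ∀ x y : V, G.Adj (σ x) (σ y) ↔ G.Adj x y)

include hσ

lemma aux_degree (x : V) : G.degree (σ x) = G.degree x := by
  unfold SimpleGraph.degree
  apply Finset.card_bij' (fun y _ => σ⁻¹ y) (fun y _ => σ y)
  · intro y hy
    rw [SimpleGraph.mem_neighborFinset] at hy ⊢
    exact (hσ x (σ⁻¹ y)).mp (by simpa using hy)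
  · intro y hy
    rw [SimpleGraph.mem_neighborFinset] at hy ⊢
    exact (hσ x y).mpr hy
  · simp
  · simp

lemma aux_good_adj (x y : V) :
    (goodRestriction G σ).Adj (σ x) (σ y) ↔ (goodRestriction G σ).Adj x y := by
  have hfix : ∀ z : V, σ (σ z) = σ z ↔ σ z = z := fun z =>
    ⟨fun h => σ.injective h, fun h => by rw [h, h]⟩
  simp only [goodRestriction, hσ, hfix, aux_degree G σ hσ]

/-- σ as an iso of the good restriction. -/
def auxIso : (goodRestriction G σ) ≃g (goodRestriction G σ) :=
  ⟨σ, aux_good_adj G σ hσ _ _⟩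

lemma aux_reach (x y : V) :
    (goodRestriction G σ).Reachable (σ x) (σ y) ↔ (goodRestriction G σ).Reachable x y := by
  constructor
  · intro h
    have := h.map (auxIso G σ hσ).symm.toHom
    simpa [auxIso] using this
  · intro h
    exact h.map (auxIso G σ hσ).toHom

lemma aux_mem (x : V) (v : V) : x ∈ Hset G σ v ↔ σ x ∈ Hset G σ (σ v) := by
  simp only [Hset, Set.mem_setOf_eq]
  exact (aux_reach G σ hσ v x).symm

end Aux

theorem Hv_iso_and_eq_or_disjoint {V : Type*} [Fintype V] (G : SimpleGraph V)
    [DecidableRel G.Adj] (σ : Equiv.Perm V)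
    (hσ : ∀ x y : V, G.Adj (σ x) (σ y) ↔ G.Adj x y) (v : V) (hv : σ v ≠ v) :
    Nonempty ((G.induce (Hset G σ v)) ≃g (G.induce (Hset G σ (σ v)))) ∧
      (Hset G σ v = Hset G σ (σ v) ∨ Disjoint (Hset G σ v) (Hset G σ (σ v))) := by
  constructor
  · refine ⟨⟨⟨fun x => ⟨σ x, (aux_mem G σ hσ x v).mp x.2⟩,
      fun y => ⟨σ⁻¹ y, ?_⟩, ?_, ?_⟩, ?_⟩⟩
    · have := (aux_mem G σ hσ (σ⁻¹ (y : V)) v).symm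
      apply this.mp
      simpa using y.2
    · intro x; ext; simp
    · intro y; ext; simp
    · intro a b
      simpa using hσ a b
  · by_cases hd : Disjoint (Hset G σ v) (Hset G σ (σ v))
    · exact Or.inr hd
    · left
      rw [Set.not_disjoint_iff] at hd
      obtain ⟨w, hw1, hw2⟩ := hd
      have h1 : (goodRestriction G σ).Reachable v w := hw1
      have h2 : (goodRestriction G σ).Reachable (σ v) w := hw2
      ext x
      simp only [Hset, Set.mem_setOf_eq]
      exact ⟨fun h => (h2.trans (h1.symm.trans h)), fun h => h1.trans (h2.symm.trans h)⟩
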